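/- Assume μ₁ ≥ μ₂. Fix k, ℓ with k + ℓ = C₁ and k ≥ 1, and assume either ℓ ≥ C₂, or both μ₁ > μ₂ and ℓ < C₂. Then there exists a natural number N such that for all i ≥ 0, D(i,k,ℓ) ≤ 0 if and only if i ≥ N; moreover there exists a natural number I such that D(i,k,ℓ) < 0 for all i ≥ I. -/

import Mathlib

/-- Overall service rate `d(k,ℓ) = k·μ₁ + min(ℓ,C₂)·μ₂`. -/
noncomputable def dRate (C₂ : ℕ) (μ₁ μ₂ : ℝ) (k ℓ : ℕ) : ℝ :=
  (k : ℝ) * μ₁ + ((min ℓ C₂ : ℕ) : ℝ) * μ₂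

/-- Membership of `(i,k,ℓ)` in the state space `X`. -/
def memX (C₁ : ℕ) (i k ℓ : ℕ) : Prop :=
  (i = 0 ∧ k + ℓ < C₁) ∨ k + ℓ = C₁

/-- `v` satisfies the optimality (Bellman) equations of the clearing system.
Terms whose coefficient `k·μ₁` or `min(ℓ,C₂)·μ₂` vanishes contribute `0`,
matching the convention that such summands are omitted. -/
def IsValue (C₁ C₂ : ℕ) (μ₁ μ₂ h₀ h₁ h₂ : ℝ) (v : ℕ → ℕ → ℕ → ℝ) : Prop :=
  v 0 0 0 = 0 ∧
  (∀ k ℓ : ℕ, k + ℓ ≤ C₁ → ¬(k = 0 ∧ ℓ = 0) →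
    v 0 k ℓ = ((k : ℝ) * h₁ + (ℓ : ℝ) * h₂) / dRate C₂ μ₁ μ₂ k ℓ
      + ((k : ℝ) * μ₁ / dRate C₂ μ₁ μ₂ k ℓ) * v 0 (k - 1) ℓ
      + (((min ℓ C₂ : ℕ) : ℝ) * μ₂ / dRate C₂ μ₁ μ₂ k ℓ) * v 0 k (ℓ - 1)) ∧
  (∀ i k ℓ : ℕ, k + ℓ = C₁ →
    v (i + 1) k ℓ =
      (((i : ℝ) + 1) * h₀ + (k : ℝ) * h₁ + (ℓ : ℝ) * h₂) / dRate C₂ μ₁ μ₂ k ℓ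
      + ((k : ℝ) * μ₁ / dRate C₂ μ₁ μ₂ k ℓ) *
          min (v i k ℓ) (v i (k - 1) (ℓ + 1))
      + (((min ℓ C₂ : ℕ) : ℝ) * μ₂ / dRate C₂ μ₁ μ₂ k ℓ) *
          min (v i (k + 1) (ℓ - 1)) (v i k ℓ))

/-- The difference `D(i,k,ℓ) = v(i,k,ℓ) − v(i,k−1,ℓ+1)`. -/
noncomputable def Dv (v : ℕ → ℕ → ℕ → ℝ) (i k ℓ : ℕ) : ℝ :=
  v i k ℓ - v i (k - 1) (ℓ + 1)

lemma min_pos' (C₂ : ℕ) (hC₂ : 1 ≤ C₂) (ℓ : ℕ) (hℓ : 1 ≤ ℓ) : 1 ≤ min ℓ C₂ :=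
  le_min hℓ hC₂

lemma dRate_pos (C₂ : ℕ) (hC₂ : 1 ≤ C₂) (μ₁ μ₂ : ℝ) (hμ₁ : 0 < μ₁) (hμ₂ : 0 < μ₂)
    (k ℓ : ℕ) (h : 1 ≤ k ∨ 1 ≤ ℓ) : 0 < dRate C₂ μ₁ μ₂ k ℓ := by
  unfold dRate
  rcases h with h | h
  · have : (1:ℝ) ≤ (k:ℝ) := by exact_mod_cast h
    have h2 : (0:ℝ) ≤ ((min ℓ C₂ : ℕ) : ℝ) * μ₂ := by positivity
    nlinarith
  · have : (1:ℝ) ≤ ((min ℓ C₂ : ℕ) : ℝ) := by exact_mod_cast min_pos' C₂ hC₂ ℓ h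
    have h2 : (0:ℝ) ≤ (k:ℝ) * μ₁ := by positivity
    nlinarith

lemma dRate_diag_mono (C₁ C₂ : ℕ) (μ₁ μ₂ : ℝ) (hμ₂ : 0 < μ₂) (hμ : μ₂ ≤ μ₁)
    (k : ℕ) (hk : 1 ≤ k) (hkC : k ≤ C₁) :
    dRate C₂ μ₁ μ₂ (k-1) (C₁-(k-1)) ≤ dRate C₂ μ₁ μ₂ k (C₁-k) := by
  unfold dRate
  have h1 : min (C₁-(k-1)) C₂ ≤ min (C₁-k) C₂ + 1 := by omega
  have h1' : ((min (C₁-(k-1)) C₂ : ℕ) : ℝ) ≤ ((min (C₁-k) C₂ : ℕ) : ℝ) + 1 := by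
    exact_mod_cast h1
  have h2 : ((k-1 : ℕ) : ℝ) = (k:ℝ) - 1 := by
    have := Nat.cast_sub (R := ℝ) hk; simpa using this
  rw [h2]
  nlinarith [hμ₂, hμ]

-- strict version under hcase heredity

lemma dRate_diag_strict (C₁ C₂ : ℕ) (μ₁ μ₂ : ℝ) (hμ₁ : 0 < μ₁) (hμ₂ : 0 < μ₂)
    (k : ℕ) (hk : 1 ≤ k) (hkC : k ≤ C₁)
    (hc : C₂ ≤ C₁ - k ∨ μ₂ < μ₁) :
    dRate C₂ μ₁ μ₂ (k-1) (C₁-(k-1)) < dRate C₂ μ₁ μ₂ k (C₁-k) := by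
  unfold dRate
  have h2 : ((k-1 : ℕ) : ℝ) = (k:ℝ) - 1 := by
    have := Nat.cast_sub (R := ℝ) hk; simpa using this
  rw [h2]
  rcases hc with hc | hc
  · have h1 : min (C₁-(k-1)) C₂ = min (C₁-k) C₂ := by omega
    rw [h1]
    nlinarith [hμ₁]
  · have h1 : min (C₁-(k-1)) C₂ ≤ min (C₁-k) C₂ + 1 := by omega
    have h1' : ((min (C₁-(k-1)) C₂ : ℕ) : ℝ) ≤ ((min (C₁-k) C₂ : ℕ) : ℝ) + 1 := by
      exact_mod_cast h1
    nlinarith [hμ₂]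

-- coefficient facts

lemma coeff_facts (C₁ C₂ : ℕ) (hC₂ : 1 ≤ C₂) (hC : C₂ < C₁) (μ₁ μ₂ : ℝ)
    (hμ₁ : 0 < μ₁) (hμ₂ : 0 < μ₂) (k : ℕ) (hkC : k ≤ C₁) :
    0 < dRate C₂ μ₁ μ₂ k (C₁-k) ∧
    0 ≤ (k:ℝ) * μ₁ / dRate C₂ μ₁ μ₂ k (C₁-k) ∧
    0 ≤ ((min (C₁-k) C₂ : ℕ) : ℝ) * μ₂ / dRate C₂ μ₁ μ₂ k (C₁-k) ∧
    (k:ℝ) * μ₁ / dRate C₂ μ₁ μ₂ k (C₁-k)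
      + ((min (C₁-k) C₂ : ℕ) : ℝ) * μ₂ / dRate C₂ μ₁ μ₂ k (C₁-k) = 1 := by
  have hd : 0 < dRate C₂ μ₁ μ₂ k (C₁-k) := by
    unfold dRate
    rcases Nat.eq_zero_or_pos k with rfl | hk
    · have : 1 ≤ min (C₁-0) C₂ := by omega
      have : (1:ℝ) ≤ ((min (C₁-0) C₂ : ℕ):ℝ) := by exact_mod_cast this
      nlinarith
    · have : (1:ℝ) ≤ (k:ℝ) := by exact_mod_cast hk
      have h2 : (0:ℝ) ≤ ((min (C₁-k) C₂ : ℕ):ℝ) * μ₂ := by positivity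
      nlinarith
  refine ⟨hd, by positivity, by positivity, ?_⟩
  rw [← add_div]
  rw [show (k:ℝ) * μ₁ + ((min (C₁-k) C₂ : ℕ) : ℝ) * μ₂ = dRate C₂ μ₁ μ₂ k (C₁-k) from rfl]
  exact div_self (ne_of_gt hd)

noncomputable def cR (C₂ : ℕ) (μ₂ h₂ : ℝ) (m : ℕ) : ℝ :=
  ((m : ℕ) : ℝ) * h₂ / (((min m C₂ : ℕ) : ℝ) * μ₂)

noncomputable def Ssum (C₂ : ℕ) (μ₂ h₂ : ℝ) : ℕ → ℝ
  | 0 => 0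
  | (ℓ+1) => Ssum C₂ μ₂ h₂ ℓ + cR C₂ μ₂ h₂ (ℓ+1)

lemma Ssum_succ (C₂ : ℕ) (μ₂ h₂ : ℝ) (ℓ : ℕ) :
    Ssum C₂ μ₂ h₂ (ℓ+1) = Ssum C₂ μ₂ h₂ ℓ + cR C₂ μ₂ h₂ (ℓ+1) := rfl

lemma cR_mono (C₂ : ℕ) (hC₂ : 1 ≤ C₂) (μ₂ h₂ : ℝ) (hμ₂ : 0 < μ₂) (hh₂ : 0 < h₂)
    (m m' : ℕ) (hm : 1 ≤ m) (hmm : m ≤ m') : cR C₂ μ₂ h₂ m ≤ cR C₂ μ₂ h₂ m' := by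
  have hN : m * min m' C₂ ≤ m' * min m C₂ := by
    rcases le_total m' C₂ with h | h
    · have e1 : min m' C₂ = m' := min_eq_left h
      have e2 : min m C₂ = m := min_eq_left (le_trans hmm h)
      rw [e1, e2, Nat.mul_comm]
    · have e1 : min m' C₂ = C₂ := min_eq_right h
      rcases le_total m C₂ with h2 | h2
      · have e2 : min m C₂ = m := min_eq_left h2
        rw [e1, e2]
        calc m * C₂ ≤ m * m' := Nat.mul_le_mul_left m h
          _ = m' * m := Nat.mul_comm _ _
      · have e2 : min m C₂ = C₂ := min_eq_right h2
        rw [e1, e2]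
        exact Nat.mul_le_mul_right C₂ hmm
  have h1 : (1:ℝ) ≤ ((min m C₂ : ℕ):ℝ) := by
    have : 1 ≤ min m C₂ := by omega
    exact_mod_cast this
  have h1' : (1:ℝ) ≤ ((min m' C₂ : ℕ):ℝ) := by
    have : 1 ≤ min m' C₂ := by omega
    exact_mod_cast this
  unfold cR
  rw [div_le_div_iff₀ (by nlinarith) (by nlinarith)]
  have hNc : ((m:ℝ)) * ((min m' C₂ : ℕ):ℝ) ≤ ((m':ℝ)) * ((min m C₂ : ℕ):ℝ) := by
    exact_mod_cast hN
  nlinarith [mul_le_mul_of_nonneg_right hNc (le_of_lt (mul_pos hh₂ hμ₂))]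

lemma min_sand_up (a b x y : ℝ) : min (a+x) (b+y) ≤ min a b + max x y := by
  have h1 : a + x ≤ a + max x y := by linarith [le_max_left x y]
  have h2 : b + y ≤ b + max x y := by linarith [le_max_right x y]
  calc min (a+x) (b+y) ≤ min (a + max x y) (b + max x y) := min_le_min h1 h2
    _ = min a b + max x y := min_add_add_right a b (max x y)

lemma min_sand_lo (a b x y : ℝ) : min a b + min x y ≤ min (a+x) (b+y) := by
  rw [← min_add_add_right]
  exact min_le_min (by linarith [min_le_left x y]) (by linarith [min_le_right x y])

lemma v0_formula (C₁ C₂ : ℕ) (hC₂ : 1 ≤ C₂) (μ₁ μ₂ h₀ h₁ h₂ : ℝ)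
    (hμ₁ : 0 < μ₁) (hμ₂ : 0 < μ₂)
    (v : ℕ → ℕ → ℕ → ℝ) (hv : IsValue C₁ C₂ μ₁ μ₂ h₀ h₁ h₂ v) :
    ∀ s k ℓ : ℕ, k + ℓ = s → k + ℓ ≤ C₁ →
      v 0 k ℓ = (k:ℝ) * (h₁/μ₁) + Ssum C₂ μ₂ h₂ ℓ := by
  intro s
  induction s with
  | zero =>
    intro k ℓ h _
    obtain ⟨hk, hℓ⟩ := Nat.add_eq_zero.mp h
    subst hk; subst hℓ
    simpa [Ssum] using hv.1
  | succ s ih =>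
    intro k ℓ hsum hle
    have hne : ¬(k = 0 ∧ ℓ = 0) := by
      rintro ⟨rfl, rfl⟩; simp at hsum
    have heq := hv.2.1 k ℓ hle hne
    have hd : 0 < dRate C₂ μ₁ μ₂ k ℓ := by
      apply dRate_pos C₂ hC₂ μ₁ μ₂ hμ₁ hμ₂
      omega
    rcases Nat.eq_zero_or_pos k with hk0 | hkpos
    · -- k = 0, ℓ = s+1 ≥ 1
      subst hk0
      have hℓ : ℓ = s + 1 := by omega
      subst hℓ
      have ihv : v 0 0 (s+1-1) = (0:ℝ) * (h₁/μ₁) + Ssum C₂ μ₂ h₂ s := by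
        simpa using ih 0 s (by omega) (by omega)
      rw [heq]
      simp only [Nat.cast_zero, zero_mul, zero_add, zero_div] at ihv ⊢
      rw [ihv]
      have hm : (1:ℕ) ≤ min (s+1) C₂ := min_pos' C₂ hC₂ _ (by omega)
      have hd' : dRate C₂ μ₁ μ₂ 0 (s+1) = ((min (s+1) C₂ : ℕ):ℝ) * μ₂ := by
        simp [dRate]
      have hmne : ((min (s+1) C₂ : ℕ):ℝ) ≠ 0 := by
        have : (1:ℝ) ≤ ((min (s+1) C₂ : ℕ):ℝ) := by exact_mod_cast hm
        linarith
      rw [hd']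
      rw [show Ssum C₂ μ₂ h₂ (s+1) = Ssum C₂ μ₂ h₂ s + ((s+1 : ℕ) : ℝ) * h₂ / (((min (s+1) C₂ : ℕ) : ℝ) * μ₂) from rfl]
      field_simp
      ring
    · rcases Nat.eq_zero_or_pos ℓ with hℓ0 | hℓpos
      · -- ℓ = 0, k = s+1
        subst hℓ0
        have hk : k = s + 1 := by omega
        subst hk
        have ihv : v 0 (s+1-1) 0 = ((s:ℕ):ℝ) * (h₁/μ₁) + Ssum C₂ μ₂ h₂ 0 := by
          simpa using ih s 0 (by omega) (by omega)
        rw [heq]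
        rw [show (s+1-1) = s from by omega] at ihv
        rw [show ((0:ℕ) ⊓ C₂) = 0 from Nat.zero_min _]
        simp only [Nat.cast_zero, zero_mul, zero_div, add_zero, zero_add]
        rw [show (s+1-1) = s from by omega, ihv]
        have hd' : dRate C₂ μ₁ μ₂ (s+1) 0 = ((s+1:ℕ):ℝ) * μ₁ := by
          simp [dRate]
        rw [hd']
        simp only [Ssum, Nat.cast_zero, zero_mul, add_zero, Nat.cast_ofNat, CharP.cast_eq_zero]
        have hne' : ((s+1:ℕ):ℝ) * μ₁ ≠ 0 := by positivity
        push_cast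
        field_simp
        ring
      · -- k ≥ 1, ℓ ≥ 1
        obtain ⟨k', rfl⟩ : ∃ k', k = k' + 1 := ⟨k-1, by omega⟩
        obtain ⟨ℓ', rfl⟩ : ∃ ℓ', ℓ = ℓ' + 1 := ⟨ℓ-1, by omega⟩
        have ih1 : v 0 k' (ℓ'+1) = (k':ℝ) * (h₁/μ₁) + Ssum C₂ μ₂ h₂ (ℓ'+1) := by
          exact ih k' (ℓ'+1) (by omega) (by omega)
        have ih2 : v 0 (k'+1) ℓ' = ((k'+1:ℕ):ℝ) * (h₁/μ₁) + Ssum C₂ μ₂ h₂ ℓ' := by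
          exact ih (k'+1) ℓ' (by omega) (by omega)
        rw [heq, show (k'+1-1) = k' from by omega, show (ℓ'+1-1) = ℓ' from by omega,
          ih1, ih2]
        have hm : (1:ℕ) ≤ min (ℓ'+1) C₂ := min_pos' C₂ hC₂ _ (by omega)
        have hmne : ((min (ℓ'+1) C₂ : ℕ):ℝ) ≠ 0 := by
          have : (1:ℝ) ≤ ((min (ℓ'+1) C₂ : ℕ):ℝ) := by exact_mod_cast hm
          linarith
        have hdval : dRate C₂ μ₁ μ₂ (k'+1) (ℓ'+1)
            = ((k'+1:ℕ):ℝ) * μ₁ + ((min (ℓ'+1) C₂ : ℕ):ℝ) * μ₂ := rfl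
        rw [show Ssum C₂ μ₂ h₂ (ℓ'+1) = Ssum C₂ μ₂ h₂ ℓ' + ((ℓ'+1 : ℕ) : ℝ) * h₂ / (((min (ℓ'+1) C₂ : ℕ) : ℝ) * μ₂) from rfl] at *
        rw [hdval]
        have hdne : ((k'+1:ℕ):ℝ) * μ₁ + ((min (ℓ'+1) C₂ : ℕ):ℝ) * μ₂ ≠ 0 := by
          rw [hdval] at hd; linarith
        push_cast at *
        field_simp
        ring

lemma min_shift (a b : ℝ) : min a b = b + min (a - b) 0 := by
  rcases le_total a b with h | h
  · rw [min_eq_left h, min_eq_left (by linarith : a - b ≤ 0)]; ring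
  · rw [min_eq_right h, min_eq_right (by linarith : (0:ℝ) ≤ a - b)]; ring

lemma base_mono (C₁ C₂ : ℕ) (hC₂ : 1 ≤ C₂) (hC : C₂ < C₁) (μ₁ μ₂ h₀ h₁ h₂ : ℝ)
    (hμ₁ : 0 < μ₁) (hμ₂ : 0 < μ₂) (hh₀ : 0 < h₀) (hh₁ : 0 < h₁) (hh₂ : 0 < h₂) (hμ : μ₂ ≤ μ₁)
    (v : ℕ → ℕ → ℕ → ℝ) (hv : IsValue C₁ C₂ μ₁ μ₂ h₀ h₁ h₂ v)
    (k : ℕ) (hk1 : 1 ≤ k) (hkC : k ≤ C₁) :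
    v (0+1) k (C₁-k) - v 0 k (C₁-k)
      ≤ v (0+1) (k-1) (C₁-(k-1)) - v 0 (k-1) (C₁-(k-1)) := by
  have F : ∀ a b : ℕ, a + b ≤ C₁ → v 0 a b = (a:ℝ) * (h₁/μ₁) + Ssum C₂ μ₂ h₂ b :=
    fun a b h => v0_formula C₁ C₂ hC₂ μ₁ μ₂ h₀ h₁ h₂ hμ₁ hμ₂ v hv (a+b) a b rfl h
  set α := h₁/μ₁ with hα
  have hBr1 : ∀ j, 1 ≤ j → j ≤ C₁ →
      min (v 0 j (C₁-j)) (v 0 (j-1) (C₁-j+1)) - v 0 (j-1) (C₁-j)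
        = min α (cR C₂ μ₂ h₂ (C₁-j+1)) := by
    intro j hj hjC
    obtain ⟨j', rfl⟩ : ∃ j', j = j' + 1 := ⟨j-1, by omega⟩
    simp only [Nat.add_sub_cancel]
    rw [F (j'+1) (C₁-(j'+1)) (by omega), F j' (C₁-(j'+1)+1) (by omega), F j' (C₁-(j'+1)) (by omega),
      Ssum_succ]
    push_cast
    rw [show ((j':ℝ)+1) * α + Ssum C₂ μ₂ h₂ (C₁-(j'+1))
          = ((j':ℝ)*α + Ssum C₂ μ₂ h₂ (C₁-(j'+1))) + α from by ring,
      show (j':ℝ)*α + (Ssum C₂ μ₂ h₂ (C₁-(j'+1)) + cR C₂ μ₂ h₂ (C₁-(j'+1)+1))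
          = ((j':ℝ)*α + Ssum C₂ μ₂ h₂ (C₁-(j'+1))) + cR C₂ μ₂ h₂ (C₁-(j'+1)+1) from by ring,
      min_add_add_left]
    ring
  have hBr2 : ∀ j, j < C₁ →
      min (v 0 (j+1) (C₁-j-1)) (v 0 j (C₁-j)) - v 0 j (C₁-j-1)
        = min α (cR C₂ μ₂ h₂ (C₁-j-1+1)) := by
    intro j hjC
    have hS : Ssum C₂ μ₂ h₂ (C₁-j) = Ssum C₂ μ₂ h₂ (C₁-j-1) + cR C₂ μ₂ h₂ (C₁-j-1+1) := by
      conv_lhs => rw [show (C₁-j:ℕ) = C₁-j-1+1 from by omega]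
      exact Ssum_succ C₂ μ₂ h₂ _
    rw [F (j+1) (C₁-j-1) (by omega), F j (C₁-j) (by omega), F j (C₁-j-1) (by omega), hS]
    push_cast
    rw [show ((j:ℝ)+1) * α + Ssum C₂ μ₂ h₂ (C₁-j-1)
          = ((j:ℝ)*α + Ssum C₂ μ₂ h₂ (C₁-j-1)) + α from by ring,
      show (j:ℝ)*α + (Ssum C₂ μ₂ h₂ (C₁-j-1) + cR C₂ μ₂ h₂ (C₁-j-1+1))
          = ((j:ℝ)*α + Ssum C₂ μ₂ h₂ (C₁-j-1)) + cR C₂ μ₂ h₂ (C₁-j-1+1) from by ring,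
      min_add_add_left]
    ring
  rcases eq_or_lt_of_le hkC with hktop | hklt
  · -- k = C₁
    subst k
    have hC2 : 2 ≤ C₁ := by omega
    simp only [Nat.sub_self]
    rw [show C₁-(C₁-1) = 1 from by omega]
    have e1 := hv.2.2 0 C₁ 0 (by omega)
    have e2 := hv.2.1 C₁ 0 (by omega) (by rintro ⟨h1, -⟩; omega)
    simp only [Nat.zero_min, Nat.cast_zero, zero_mul, zero_div, add_zero, zero_add] at e1 e2
    have hb1 := hBr1 C₁ (by omega) le_rfl
    simp only [Nat.sub_self, Nat.zero_add, zero_add] at hb1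
    obtain ⟨hd1pos, hp1, hq1, hpq1⟩ := coeff_facts C₁ C₂ hC₂ hC μ₁ μ₂ hμ₁ hμ₂ C₁ le_rfl
    simp only [Nat.sub_self, Nat.zero_min, Nat.cast_zero, zero_mul, zero_div, add_zero] at hd1pos hp1 hq1 hpq1
    set d1 := dRate C₂ μ₁ μ₂ C₁ 0 with hd1
    have key1 : v (0+1) C₁ 0 - v 0 C₁ 0 = h₀/d1 + ((C₁:ℝ)*μ₁/d1) * min α (cR C₂ μ₂ h₂ 1) := by
      linear_combination e1 - e2 + ((C₁:ℝ)*μ₁/d1) * hb1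
    rw [hpq1, one_mul] at key1
    -- state C₁ - 1
    have e3 := hv.2.2 0 (C₁-1) (C₁-(C₁-1)) (by omega)
    have e4 := hv.2.1 (C₁-1) (C₁-(C₁-1)) (by omega) (by rintro ⟨h1, -⟩; omega)
    have hb1' := hBr1 (C₁-1) (by omega) (by omega)
    have hb2' := hBr2 (C₁-1) (by omega)
    obtain ⟨hd0pos, hp0, hq0, hpq0⟩ := coeff_facts C₁ C₂ hC₂ hC μ₁ μ₂ hμ₁ hμ₂ (C₁-1) (by omega)
    set d0 := dRate C₂ μ₁ μ₂ (C₁-1) (C₁-(C₁-1)) with hd0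
    have key0 : v (0+1) (C₁-1) (C₁-(C₁-1)) - v 0 (C₁-1) (C₁-(C₁-1))
        = h₀/d0 + (((C₁-1:ℕ):ℝ)*μ₁/d0) * min α (cR C₂ μ₂ h₂ (C₁-(C₁-1)+1))
          + (((min (C₁-(C₁-1)) C₂ : ℕ):ℝ)*μ₂/d0) * min α (cR C₂ μ₂ h₂ (C₁-(C₁-1)-1+1)) := by
      linear_combination e3 - e4 + (((C₁-1:ℕ):ℝ)*μ₁/d0) * hb1'
        + (((min (C₁-(C₁-1)) C₂ : ℕ):ℝ)*μ₂/d0) * hb2'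
    rw [show C₁-(C₁-1) = 1 from by omega] at key0 hpq0
    rw [show (1:ℕ)-1+1 = 1 from rfl] at key0
    have hmono : min α (cR C₂ μ₂ h₂ 1) ≤ min α (cR C₂ μ₂ h₂ (1+1)) :=
      min_le_min le_rfl (cR_mono C₂ hC₂ μ₂ h₂ hμ₂ hh₂ _ _ (by omega) (by omega))
    have c0 : min α (cR C₂ μ₂ h₂ 1)
        ≤ (((C₁-1:ℕ):ℝ)*μ₁/d0) * min α (cR C₂ μ₂ h₂ (1+1))
          + (((min 1 C₂ : ℕ):ℝ)*μ₂/d0) * min α (cR C₂ μ₂ h₂ 1) := by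
      have e : (((C₁-1:ℕ):ℝ)*μ₁/d0) * min α (cR C₂ μ₂ h₂ (1+1))
          + (((min 1 C₂ : ℕ):ℝ)*μ₂/d0) * min α (cR C₂ μ₂ h₂ 1)
          = (((C₁-1:ℕ):ℝ)*μ₁/d0 + ((min 1 C₂ : ℕ):ℝ)*μ₂/d0) * min α (cR C₂ μ₂ h₂ 1)
            + (((C₁-1:ℕ):ℝ)*μ₁/d0) * (min α (cR C₂ μ₂ h₂ (1+1)) - min α (cR C₂ μ₂ h₂ 1)) := by ring
      rw [e, hpq0, one_mul]
      have := mul_nonneg hp0 (sub_nonneg.mpr hmono)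
      linarith
    have hdm : d0 ≤ d1 := by
      rw [hd1, hd0, show C₁-(C₁-1) = 1 from by omega]
      have h := dRate_diag_mono C₁ C₂ μ₁ μ₂ hμ₂ hμ C₁ (by omega) le_rfl
      rw [show C₁-(C₁-1) = 1 from by omega, Nat.sub_self] at h
      exact h
    have hdd : h₀/d1 ≤ h₀/d0 := by gcongr
    linarith [key1, key0, c0, hdd]
  · -- k < C₁
    have e1 := hv.2.2 0 k (C₁-k) (by omega)
    have e2 := hv.2.1 k (C₁-k) (by omega) (by rintro ⟨h1, -⟩; omega)
    have hb1 := hBr1 k hk1 hkC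
    have hb2 := hBr2 k hklt
    obtain ⟨hd1pos, hp1, hq1, hpq1⟩ := coeff_facts C₁ C₂ hC₂ hC μ₁ μ₂ hμ₁ hμ₂ k (by omega)
    set d1 := dRate C₂ μ₁ μ₂ k (C₁-k) with hd1
    have key1 : v (0+1) k (C₁-k) - v 0 k (C₁-k)
        = h₀/d1 + ((k:ℝ)*μ₁/d1) * min α (cR C₂ μ₂ h₂ (C₁-k+1))
          + (((min (C₁-k) C₂ : ℕ):ℝ)*μ₂/d1) * min α (cR C₂ μ₂ h₂ (C₁-k-1+1)) := by
      linear_combination e1 - e2 + ((k:ℝ)*μ₁/d1) * hb1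
        + (((min (C₁-k) C₂ : ℕ):ℝ)*μ₂/d1) * hb2
    have hmono1 : min α (cR C₂ μ₂ h₂ (C₁-k-1+1)) ≤ min α (cR C₂ μ₂ h₂ (C₁-k+1)) :=
      min_le_min le_rfl (cR_mono C₂ hC₂ μ₂ h₂ hμ₂ hh₂ _ _ (by omega) (by omega))
    have c1 : ((k:ℝ)*μ₁/d1) * min α (cR C₂ μ₂ h₂ (C₁-k+1))
        + (((min (C₁-k) C₂ : ℕ):ℝ)*μ₂/d1) * min α (cR C₂ μ₂ h₂ (C₁-k-1+1))
        ≤ min α (cR C₂ μ₂ h₂ (C₁-k+1)) := by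
      have e : ((k:ℝ)*μ₁/d1) * min α (cR C₂ μ₂ h₂ (C₁-k+1))
          + (((min (C₁-k) C₂ : ℕ):ℝ)*μ₂/d1) * min α (cR C₂ μ₂ h₂ (C₁-k-1+1))
          = ((k:ℝ)*μ₁/d1 + ((min (C₁-k) C₂ : ℕ):ℝ)*μ₂/d1) * min α (cR C₂ μ₂ h₂ (C₁-k+1))
            - (((min (C₁-k) C₂ : ℕ):ℝ)*μ₂/d1)
              * (min α (cR C₂ μ₂ h₂ (C₁-k+1)) - min α (cR C₂ μ₂ h₂ (C₁-k-1+1))) := by ring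
      rw [e, hpq1, one_mul]
      have := mul_nonneg hq1 (sub_nonneg.mpr hmono1)
      linarith
    rcases Nat.eq_zero_or_pos (k-1) with hk0 | hk'pos
    · -- k = 1
      rw [hk0]
      have hkeq : k = 1 := by omega
      subst k
      have e3 := hv.2.2 0 0 C₁ (by omega)
      have e4 := hv.2.1 0 C₁ (by omega) (by rintro ⟨-, h2⟩; omega)
      simp only [Nat.cast_zero, zero_mul, zero_div, zero_add, add_zero] at e3 e4
      have hb2' := hBr2 0 (by omega)
      simp only [Nat.sub_zero, Nat.zero_add, zero_add] at hb2'
      obtain ⟨hd0pos, hp0, hq0, hpq0⟩ := coeff_facts C₁ C₂ hC₂ hC μ₁ μ₂ hμ₁ hμ₂ 0 (by omega)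
      simp only [Nat.sub_zero, Nat.cast_zero, zero_mul, zero_div, zero_add] at hd0pos hp0 hq0 hpq0
      set d0 := dRate C₂ μ₁ μ₂ 0 C₁ with hd0
      have key0 : v (0+1) 0 (C₁-0) - v 0 0 (C₁-0)
          = h₀/d0 + (((min C₁ C₂ : ℕ):ℝ)*μ₂/d0) * min α (cR C₂ μ₂ h₂ (C₁-1+1)) := by
        simp only [Nat.sub_zero]
        linear_combination e3 - e4 + (((min C₁ C₂ : ℕ):ℝ)*μ₂/d0) * hb2'
      rw [hpq0, one_mul] at key0
      have harg : C₁-1-1+1 ≤ C₁-1+1 := by omega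
      have hmono2 : min α (cR C₂ μ₂ h₂ (C₁-1-1+1)) ≤ min α (cR C₂ μ₂ h₂ (C₁-1+1)) :=
        min_le_min le_rfl (cR_mono C₂ hC₂ μ₂ h₂ hμ₂ hh₂ _ _ (by omega) harg)
      have hdm : d0 ≤ d1 := by
        rw [hd1, hd0]
        have h := dRate_diag_mono C₁ C₂ μ₁ μ₂ hμ₂ hμ 1 (by omega) (by omega)
        simpa using h
      have hdd : h₀/d1 ≤ h₀/d0 := by gcongr
      linarith [key1, key0, c1, hdd]
    · -- 2 ≤ k
      have e3 := hv.2.2 0 (k-1) (C₁-(k-1)) (by omega)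
      have e4 := hv.2.1 (k-1) (C₁-(k-1)) (by omega) (by rintro ⟨h1, -⟩; omega)
      have hb1' := hBr1 (k-1) (by omega) (by omega)
      have hb2' := hBr2 (k-1) (by omega)
      obtain ⟨hd0pos, hp0, hq0, hpq0⟩ := coeff_facts C₁ C₂ hC₂ hC μ₁ μ₂ hμ₁ hμ₂ (k-1) (by omega)
      set d0 := dRate C₂ μ₁ μ₂ (k-1) (C₁-(k-1)) with hd0
      have key0 : v (0+1) (k-1) (C₁-(k-1)) - v 0 (k-1) (C₁-(k-1))
          = h₀/d0 + (((k-1:ℕ):ℝ)*μ₁/d0) * min α (cR C₂ μ₂ h₂ (C₁-(k-1)+1))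
            + (((min (C₁-(k-1)) C₂ : ℕ):ℝ)*μ₂/d0) * min α (cR C₂ μ₂ h₂ (C₁-(k-1)-1+1)) := by
        linear_combination e3 - e4 + (((k-1:ℕ):ℝ)*μ₁/d0) * hb1'
          + (((min (C₁-(k-1)) C₂ : ℕ):ℝ)*μ₂/d0) * hb2'
      rw [show C₁-(k-1)-1+1 = C₁-k+1 from by omega] at key0
      have hmono0 : min α (cR C₂ μ₂ h₂ (C₁-k+1)) ≤ min α (cR C₂ μ₂ h₂ (C₁-(k-1)+1)) :=
        min_le_min le_rfl (cR_mono C₂ hC₂ μ₂ h₂ hμ₂ hh₂ _ _ (by omega) (by omega))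
      have c0 : min α (cR C₂ μ₂ h₂ (C₁-k+1))
          ≤ (((k-1:ℕ):ℝ)*μ₁/d0) * min α (cR C₂ μ₂ h₂ (C₁-(k-1)+1))
            + (((min (C₁-(k-1)) C₂ : ℕ):ℝ)*μ₂/d0) * min α (cR C₂ μ₂ h₂ (C₁-k+1)) := by
        have e : (((k-1:ℕ):ℝ)*μ₁/d0) * min α (cR C₂ μ₂ h₂ (C₁-(k-1)+1))
            + (((min (C₁-(k-1)) C₂ : ℕ):ℝ)*μ₂/d0) * min α (cR C₂ μ₂ h₂ (C₁-k+1))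
            = (((k-1:ℕ):ℝ)*μ₁/d0 + ((min (C₁-(k-1)) C₂ : ℕ):ℝ)*μ₂/d0)
                * min α (cR C₂ μ₂ h₂ (C₁-k+1))
              + (((k-1:ℕ):ℝ)*μ₁/d0)
                * (min α (cR C₂ μ₂ h₂ (C₁-(k-1)+1)) - min α (cR C₂ μ₂ h₂ (C₁-k+1))) := by ring
        rw [e, hpq0, one_mul]
        have := mul_nonneg hp0 (sub_nonneg.mpr hmono0)
        linarith
      have hdm : d0 ≤ d1 := by
        rw [hd1, hd0]
        exact dRate_diag_mono C₁ C₂ μ₁ μ₂ hμ₂ hμ k hk1 hkC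
      have hdd : h₀/d1 ≤ h₀/d0 := by gcongr
      linarith [key1, key0, c1, c0, hdd]

lemma step_mono (C₁ C₂ : ℕ) (hC₂ : 1 ≤ C₂) (hC : C₂ < C₁) (μ₁ μ₂ h₀ h₁ h₂ : ℝ)
    (hμ₁ : 0 < μ₁) (hμ₂ : 0 < μ₂) (hh₀ : 0 < h₀) (hμ : μ₂ ≤ μ₁)
    (v : ℕ → ℕ → ℕ → ℝ) (hv : IsValue C₁ C₂ μ₁ μ₂ h₀ h₁ h₂ v) (i : ℕ)
    (IH : ∀ j, 1 ≤ j → j ≤ C₁ →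
      v (i+1) j (C₁-j) - v i j (C₁-j) ≤ v (i+1) (j-1) (C₁-(j-1)) - v i (j-1) (C₁-(j-1)))
    (k : ℕ) (hk1 : 1 ≤ k) (hkC : k ≤ C₁) :
    v (i+1+1) k (C₁-k) - v (i+1) k (C₁-k)
      ≤ v (i+1+1) (k-1) (C₁-(k-1)) - v (i+1) (k-1) (C₁-(k-1)) := by
  have bell : ∀ a j, 1 ≤ j → j < C₁ →
      v (a+1) j (C₁-j) = (((a:ℝ)+1)*h₀ + (j:ℝ)*h₁ + ((C₁-j : ℕ):ℝ)*h₂) / dRate C₂ μ₁ μ₂ j (C₁-j)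
        + ((j:ℝ)*μ₁ / dRate C₂ μ₁ μ₂ j (C₁-j)) * min (v a j (C₁-j)) (v a (j-1) (C₁-(j-1)))
        + (((min (C₁-j) C₂ : ℕ):ℝ)*μ₂ / dRate C₂ μ₁ μ₂ j (C₁-j))
            * min (v a (j+1) (C₁-(j+1))) (v a j (C₁-j)) := by
    intro a j h1 h2
    have h := hv.2.2 a j (C₁-j) (by omega)
    rwa [show C₁-j+1 = C₁-(j-1) from by omega, show C₁-j-1 = C₁-(j+1) from by omega] at h
  rcases eq_or_lt_of_le hkC with hktop | hklt
  · -- case C : k = C₁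
    subst k
    have hC2 : 2 ≤ C₁ := by omega
    simp only [Nat.sub_self] at *
    rw [show C₁-(C₁-1) = 1 from by omega]
    have e1 := hv.2.2 (i+1) C₁ 0 (by omega)
    have e2 := hv.2.2 i C₁ 0 (by omega)
    simp only [Nat.zero_min, Nat.cast_zero, zero_mul, zero_div, add_zero, zero_add] at e1 e2
    have e3 := bell (i+1) (C₁-1) (by omega) (by omega)
    have e4 := bell i (C₁-1) (by omega) (by omega)
    rw [show C₁-1+1 = C₁ from by omega] at e3 e4
    simp only [Nat.sub_self] at e3 e4
    rw [show C₁-(C₁-1) = 1 from by omega] at e3 e4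
    rw [show ((i+1:ℕ):ℝ) = (i:ℝ)+1 from by push_cast; ring] at e1 e3
    obtain ⟨hd1pos, hp1, hq1, hpq1⟩ := coeff_facts C₁ C₂ hC₂ hC μ₁ μ₂ hμ₁ hμ₂ C₁ le_rfl
    obtain ⟨hd0pos, hp0, hq0, hpq0⟩ := coeff_facts C₁ C₂ hC₂ hC μ₁ μ₂ hμ₁ hμ₂ (C₁-1) (by omega)
    simp only [Nat.sub_self, Nat.zero_min, Nat.cast_zero, zero_mul, zero_div, add_zero] at hd1pos hp1 hq1 hpq1
    rw [show C₁-(C₁-1) = 1 from by omega] at hd0pos hp0 hq0 hpq0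
    have hdmono := dRate_diag_mono C₁ C₂ μ₁ μ₂ hμ₂ hμ C₁ (by omega) le_rfl
    simp only [Nat.sub_self] at hdmono
    rw [show C₁-(C₁-1) = 1 from by omega] at hdmono
    set d1 := dRate C₂ μ₁ μ₂ C₁ 0 with hd1
    set d0 := dRate C₂ μ₁ μ₂ (C₁-1) 1 with hd0
    set g1 := min (v (i+1) C₁ 0) (v (i+1) (C₁-1) 1)
      - min (v i C₁ 0) (v i (C₁-1) 1) with hg1
    set g0 := min (v (i+1) (C₁-1) 1) (v (i+1) (C₁-1-1) (C₁-(C₁-1-1)))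
      - min (v i (C₁-1) 1) (v i (C₁-1-1) (C₁-(C₁-1-1))) with hg0
    have key1 : v (i+1+1) C₁ 0 - v (i+1) C₁ 0 = h₀/d1 + ((C₁:ℝ)*μ₁/d1) * g1 := by
      rw [hg1]; linear_combination e1 - e2
    have key0 : v (i+1+1) (C₁-1) 1 - v (i+1) (C₁-1) 1
        = h₀/d0 + (((C₁-1:ℕ):ℝ)*μ₁/d0) * g0 + (((min 1 C₂ : ℕ):ℝ)*μ₂/d0) * g1 := by
      rw [hg0, hg1]; linear_combination e3 - e4
    have hIHC := IH C₁ (by omega) le_rfl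
    simp only [Nat.sub_self] at hIHC
    rw [show C₁-(C₁-1) = 1 from by omega] at hIHC
    have hIHC1 := IH (C₁-1) (by omega) (by omega)
    rw [show C₁-(C₁-1) = 1 from by omega] at hIHC1
    have hb1l : v (i+1) C₁ 0 - v i C₁ 0 ≤ g1 := by
      have h := min_sand_lo (v i C₁ 0) (v i (C₁-1) 1)
        (v (i+1) C₁ 0 - v i C₁ 0) (v (i+1) (C₁-1) 1 - v i (C₁-1) 1)
      rw [min_eq_left hIHC,
        show v i C₁ 0 + (v (i+1) C₁ 0 - v i C₁ 0) = v (i+1) C₁ 0 from by ring,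
        show v i (C₁-1) 1 + (v (i+1) (C₁-1) 1 - v i (C₁-1) 1) = v (i+1) (C₁-1) 1 from by ring] at h
      rw [hg1]; linarith
    have hb1u : g1 ≤ v (i+1) (C₁-1) 1 - v i (C₁-1) 1 := by
      have h := min_sand_up (v i C₁ 0) (v i (C₁-1) 1)
        (v (i+1) C₁ 0 - v i C₁ 0) (v (i+1) (C₁-1) 1 - v i (C₁-1) 1)
      rw [max_eq_right hIHC,
        show v i C₁ 0 + (v (i+1) C₁ 0 - v i C₁ 0) = v (i+1) C₁ 0 from by ring,
        show v i (C₁-1) 1 + (v (i+1) (C₁-1) 1 - v i (C₁-1) 1) = v (i+1) (C₁-1) 1 from by ring] at h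
      rw [hg1]; linarith
    have hb0l : v (i+1) (C₁-1) 1 - v i (C₁-1) 1 ≤ g0 := by
      have h := min_sand_lo (v i (C₁-1) 1) (v i (C₁-1-1) (C₁-(C₁-1-1)))
        (v (i+1) (C₁-1) 1 - v i (C₁-1) 1)
        (v (i+1) (C₁-1-1) (C₁-(C₁-1-1)) - v i (C₁-1-1) (C₁-(C₁-1-1)))
      rw [min_eq_left hIHC1,
        show v i (C₁-1) 1 + (v (i+1) (C₁-1) 1 - v i (C₁-1) 1) = v (i+1) (C₁-1) 1 from by ring,
        show v i (C₁-1-1) (C₁-(C₁-1-1)) + (v (i+1) (C₁-1-1) (C₁-(C₁-1-1)) - v i (C₁-1-1) (C₁-(C₁-1-1)))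
          = v (i+1) (C₁-1-1) (C₁-(C₁-1-1)) from by ring] at h
      rw [hg0]; linarith
    have hp1one : (C₁:ℝ)*μ₁/d1 = 1 := by
      rw [hd1]; rw [hd1] at hpq1; linarith
    have c0 : g1 ≤ (((C₁-1:ℕ):ℝ)*μ₁/d0) * g0 + (((min 1 C₂ : ℕ):ℝ)*μ₂/d0) * g1 := by
      have h01 : g1 ≤ g0 := le_trans hb1u hb0l
      have e : (((C₁-1:ℕ):ℝ)*μ₁/d0) * g0 + (((min 1 C₂ : ℕ):ℝ)*μ₂/d0) * g1
          = (((C₁-1:ℕ):ℝ)*μ₁/d0 + ((min 1 C₂ : ℕ):ℝ)*μ₂/d0) * g1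
            + (((C₁-1:ℕ):ℝ)*μ₁/d0) * (g0 - g1) := by ring
      rw [e, hpq0, one_mul]
      have := mul_nonneg hp0 (sub_nonneg.mpr h01)
      linarith
    have hdd : h₀/d1 ≤ h₀/d0 := by gcongr
    rw [hp1one, one_mul] at key1
    linarith [key1, key0, c0, hdd]
  · -- k < C₁
    rcases Nat.lt_or_ge k 2 with hk2 | hk2
    · -- case B : k = 1 < C₁
      have hk1' : k = 1 := by omega
      subst hk1'
      simp only [show (1:ℕ)-1 = 0 from rfl, Nat.sub_zero] at *
      have e1 := bell (i+1) 1 (by omega) hklt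
      have e2 := bell i 1 (by omega) hklt
      simp only [show (1:ℕ)-1 = 0 from rfl, Nat.sub_zero, show (1:ℕ)+1 = 2 from rfl] at e1 e2
      have e3 := hv.2.2 (i+1) 0 C₁ (by omega)
      have e4 := hv.2.2 i 0 C₁ (by omega)
      simp only [Nat.cast_zero, zero_mul, zero_div, zero_add, add_zero] at e3 e4
      rw [show ((i+1:ℕ):ℝ) = (i:ℝ)+1 from by push_cast; ring] at e1 e3
      obtain ⟨hd1pos, hp1, hq1, hpq1⟩ := coeff_facts C₁ C₂ hC₂ hC μ₁ μ₂ hμ₁ hμ₂ 1 (by omega)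
      obtain ⟨hd0pos, hp0, hq0, hpq0⟩ := coeff_facts C₁ C₂ hC₂ hC μ₁ μ₂ hμ₁ hμ₂ 0 (by omega)
      simp only [Nat.sub_zero, Nat.cast_zero, zero_mul, zero_div, zero_add] at hd0pos hp0 hq0 hpq0
      have hdmono := dRate_diag_mono C₁ C₂ μ₁ μ₂ hμ₂ hμ 1 (by omega) (by omega)
      simp only [show (1:ℕ)-1 = 0 from rfl, Nat.sub_zero] at hdmono
      set d1 := dRate C₂ μ₁ μ₂ 1 (C₁-1) with hd1
      set d0 := dRate C₂ μ₁ μ₂ 0 C₁ with hd0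
      set g1 := min (v (i+1) 1 (C₁-1)) (v (i+1) 0 C₁) - min (v i 1 (C₁-1)) (v i 0 C₁) with hg1
      set g2 := min (v (i+1) 2 (C₁-2)) (v (i+1) 1 (C₁-1))
        - min (v i 2 (C₁-2)) (v i 1 (C₁-1)) with hg2
      have key1 : v (i+1+1) 1 (C₁-1) - v (i+1) 1 (C₁-1)
          = h₀/d1 + (((1:ℕ):ℝ)*μ₁/d1) * g1 + (((min (C₁-1) C₂ : ℕ):ℝ)*μ₂/d1) * g2 := by
        rw [hg1, hg2]; linear_combination e1 - e2
      have key0 : v (i+1+1) 0 C₁ - v (i+1) 0 C₁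
          = h₀/d0 + (((min C₁ C₂ : ℕ):ℝ)*μ₂/d0) * g1 := by
        rw [hg1]; linear_combination e3 - e4
      have hIH1 := IH 1 (by omega) (by omega)
      simp only [show (1:ℕ)-1 = 0 from rfl, Nat.sub_zero] at hIH1
      have hIH2 := IH 2 (by omega) (by omega)
      simp only [show (2:ℕ)-1 = 1 from rfl] at hIH2
      have hb1l : v (i+1) 1 (C₁-1) - v i 1 (C₁-1) ≤ g1 := by
        have h := min_sand_lo (v i 1 (C₁-1)) (v i 0 C₁)
          (v (i+1) 1 (C₁-1) - v i 1 (C₁-1)) (v (i+1) 0 C₁ - v i 0 C₁)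
        rw [min_eq_left hIH1,
          show v i 1 (C₁-1) + (v (i+1) 1 (C₁-1) - v i 1 (C₁-1)) = v (i+1) 1 (C₁-1) from by ring,
          show v i 0 C₁ + (v (i+1) 0 C₁ - v i 0 C₁) = v (i+1) 0 C₁ from by ring] at h
        rw [hg1]; linarith
      have hb1u : g1 ≤ v (i+1) 0 C₁ - v i 0 C₁ := by
        have h := min_sand_up (v i 1 (C₁-1)) (v i 0 C₁)
          (v (i+1) 1 (C₁-1) - v i 1 (C₁-1)) (v (i+1) 0 C₁ - v i 0 C₁)
        rw [max_eq_right hIH1,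
          show v i 1 (C₁-1) + (v (i+1) 1 (C₁-1) - v i 1 (C₁-1)) = v (i+1) 1 (C₁-1) from by ring,
          show v i 0 C₁ + (v (i+1) 0 C₁ - v i 0 C₁) = v (i+1) 0 C₁ from by ring] at h
        rw [hg1]; linarith
      have hb2u : g2 ≤ v (i+1) 1 (C₁-1) - v i 1 (C₁-1) := by
        have h := min_sand_up (v i 2 (C₁-2)) (v i 1 (C₁-1))
          (v (i+1) 2 (C₁-2) - v i 2 (C₁-2)) (v (i+1) 1 (C₁-1) - v i 1 (C₁-1))
        rw [max_eq_right hIH2,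
          show v i 2 (C₁-2) + (v (i+1) 2 (C₁-2) - v i 2 (C₁-2)) = v (i+1) 2 (C₁-2) from by ring,
          show v i 1 (C₁-1) + (v (i+1) 1 (C₁-1) - v i 1 (C₁-1)) = v (i+1) 1 (C₁-1) from by ring] at h
        rw [hg2]; linarith
      have c1 : (((1:ℕ):ℝ)*μ₁/d1) * g1 + (((min (C₁-1) C₂ : ℕ):ℝ)*μ₂/d1) * g2 ≤ g1 := by
        have h21 : g2 ≤ g1 := le_trans hb2u hb1l
        have e : (((1:ℕ):ℝ)*μ₁/d1) * g1 + (((min (C₁-1) C₂ : ℕ):ℝ)*μ₂/d1) * g2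
            = (((1:ℕ):ℝ)*μ₁/d1 + ((min (C₁-1) C₂ : ℕ):ℝ)*μ₂/d1) * g1
              - (((min (C₁-1) C₂ : ℕ):ℝ)*μ₂/d1) * (g1 - g2) := by ring
        rw [e, hpq1, one_mul]
        have := mul_nonneg hq1 (sub_nonneg.mpr h21)
        linarith
      have hq0one : ((min C₁ C₂ : ℕ):ℝ)*μ₂/d0 = 1 := hpq0
      rw [hq0one, one_mul] at key0
      have hdd : h₀/d1 ≤ h₀/d0 := by gcongr
      linarith [key1, key0, c1, hdd]
    · -- case A : 2 ≤ k < C₁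
      have e1 := bell (i+1) k hk1 hklt
      have e2 := bell i k hk1 hklt
      have e3 := bell (i+1) (k-1) (by omega) (by omega)
      have e4 := bell i (k-1) (by omega) (by omega)
      rw [show k-1+1 = k from by omega] at e3 e4
      rw [show ((i+1:ℕ):ℝ) = (i:ℝ)+1 from by push_cast; ring] at e1 e3
      obtain ⟨hd1pos, hp1, hq1, hpq1⟩ := coeff_facts C₁ C₂ hC₂ hC μ₁ μ₂ hμ₁ hμ₂ k hkC
      obtain ⟨hd0pos, hp0, hq0, hpq0⟩ := coeff_facts C₁ C₂ hC₂ hC μ₁ μ₂ hμ₁ hμ₂ (k-1) (by omega)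
      have hdmono := dRate_diag_mono C₁ C₂ μ₁ μ₂ hμ₂ hμ k hk1 hkC
      set d1 := dRate C₂ μ₁ μ₂ k (C₁-k) with hd1
      set d0 := dRate C₂ μ₁ μ₂ (k-1) (C₁-(k-1)) with hd0
      set g1 := min (v (i+1) k (C₁-k)) (v (i+1) (k-1) (C₁-(k-1)))
        - min (v i k (C₁-k)) (v i (k-1) (C₁-(k-1))) with hg1
      set g2 := min (v (i+1) (k+1) (C₁-(k+1))) (v (i+1) k (C₁-k))
        - min (v i (k+1) (C₁-(k+1))) (v i k (C₁-k)) with hg2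
      set g0 := min (v (i+1) (k-1) (C₁-(k-1))) (v (i+1) (k-1-1) (C₁-(k-1-1)))
        - min (v i (k-1) (C₁-(k-1))) (v i (k-1-1) (C₁-(k-1-1))) with hg0
      have key1 : v (i+1+1) k (C₁-k) - v (i+1) k (C₁-k)
          = h₀/d1 + ((k:ℝ)*μ₁/d1) * g1 + (((min (C₁-k) C₂ : ℕ):ℝ)*μ₂/d1) * g2 := by
        rw [hg1, hg2]
        linear_combination e1 - e2
      have key0 : v (i+1+1) (k-1) (C₁-(k-1)) - v (i+1) (k-1) (C₁-(k-1))
          = h₀/d0 + (((k-1:ℕ):ℝ)*μ₁/d0) * g0 + (((min (C₁-(k-1)) C₂ : ℕ):ℝ)*μ₂/d0) * g1 := by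
        rw [hg0, hg1]
        linear_combination e3 - e4
      -- sandwich bounds
      have hb1u : g1 ≤ v (i+1) (k-1) (C₁-(k-1)) - v i (k-1) (C₁-(k-1)) := by
        have h := min_sand_up (v i k (C₁-k)) (v i (k-1) (C₁-(k-1)))
          (v (i+1) k (C₁-k) - v i k (C₁-k))
          (v (i+1) (k-1) (C₁-(k-1)) - v i (k-1) (C₁-(k-1)))
        rw [max_eq_right (IH k hk1 hkC),
          show v i k (C₁-k) + (v (i+1) k (C₁-k) - v i k (C₁-k)) = v (i+1) k (C₁-k) from by ring,
          show v i (k-1) (C₁-(k-1)) + (v (i+1) (k-1) (C₁-(k-1)) - v i (k-1) (C₁-(k-1)))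
            = v (i+1) (k-1) (C₁-(k-1)) from by ring] at h
        rw [hg1]; linarith
      have hb1l : v (i+1) k (C₁-k) - v i k (C₁-k) ≤ g1 := by
        have h := min_sand_lo (v i k (C₁-k)) (v i (k-1) (C₁-(k-1)))
          (v (i+1) k (C₁-k) - v i k (C₁-k))
          (v (i+1) (k-1) (C₁-(k-1)) - v i (k-1) (C₁-(k-1)))
        rw [min_eq_left (IH k hk1 hkC),
          show v i k (C₁-k) + (v (i+1) k (C₁-k) - v i k (C₁-k)) = v (i+1) k (C₁-k) from by ring,
          show v i (k-1) (C₁-(k-1)) + (v (i+1) (k-1) (C₁-(k-1)) - v i (k-1) (C₁-(k-1)))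
            = v (i+1) (k-1) (C₁-(k-1)) from by ring] at h
        rw [hg1]; linarith
      have hb2u : g2 ≤ v (i+1) k (C₁-k) - v i k (C₁-k) := by
        have h := min_sand_up (v i (k+1) (C₁-(k+1))) (v i k (C₁-k))
          (v (i+1) (k+1) (C₁-(k+1)) - v i (k+1) (C₁-(k+1)))
          (v (i+1) k (C₁-k) - v i k (C₁-k))
        have hIH := IH (k+1) (by omega) (by omega)
        rw [show k+1-1 = k from by omega] at hIH
        rw [max_eq_right hIH,
          show v i (k+1) (C₁-(k+1)) + (v (i+1) (k+1) (C₁-(k+1)) - v i (k+1) (C₁-(k+1)))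
            = v (i+1) (k+1) (C₁-(k+1)) from by ring,
          show v i k (C₁-k) + (v (i+1) k (C₁-k) - v i k (C₁-k)) = v (i+1) k (C₁-k) from by ring] at h
        rw [hg2]; linarith
      have hb0l : v (i+1) (k-1) (C₁-(k-1)) - v i (k-1) (C₁-(k-1)) ≤ g0 := by
        have h := min_sand_lo (v i (k-1) (C₁-(k-1))) (v i (k-1-1) (C₁-(k-1-1)))
          (v (i+1) (k-1) (C₁-(k-1)) - v i (k-1) (C₁-(k-1)))
          (v (i+1) (k-1-1) (C₁-(k-1-1)) - v i (k-1-1) (C₁-(k-1-1)))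
        rw [min_eq_left (IH (k-1) (by omega) (by omega)),
          show v i (k-1) (C₁-(k-1)) + (v (i+1) (k-1) (C₁-(k-1)) - v i (k-1) (C₁-(k-1)))
            = v (i+1) (k-1) (C₁-(k-1)) from by ring,
          show v i (k-1-1) (C₁-(k-1-1)) + (v (i+1) (k-1-1) (C₁-(k-1-1)) - v i (k-1-1) (C₁-(k-1-1)))
            = v (i+1) (k-1-1) (C₁-(k-1-1)) from by ring] at h
        rw [hg0]; linarith
      have c1 : ((k:ℝ)*μ₁/d1) * g1 + (((min (C₁-k) C₂ : ℕ):ℝ)*μ₂/d1) * g2 ≤ g1 := by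
        have h21 : g2 ≤ g1 := le_trans hb2u hb1l
        have e : ((k:ℝ)*μ₁/d1) * g1 + (((min (C₁-k) C₂ : ℕ):ℝ)*μ₂/d1) * g2
            = ((k:ℝ)*μ₁/d1 + ((min (C₁-k) C₂ : ℕ):ℝ)*μ₂/d1) * g1
              - (((min (C₁-k) C₂ : ℕ):ℝ)*μ₂/d1) * (g1 - g2) := by ring
        rw [e, hpq1, one_mul]
        have := mul_nonneg hq1 (sub_nonneg.mpr h21)
        linarith
      have c0 : g1 ≤ (((k-1:ℕ):ℝ)*μ₁/d0) * g0 + (((min (C₁-(k-1)) C₂ : ℕ):ℝ)*μ₂/d0) * g1 := by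
        have h01 : g1 ≤ g0 := le_trans hb1u hb0l
        have e : (((k-1:ℕ):ℝ)*μ₁/d0) * g0 + (((min (C₁-(k-1)) C₂ : ℕ):ℝ)*μ₂/d0) * g1
            = (((k-1:ℕ):ℝ)*μ₁/d0 + ((min (C₁-(k-1)) C₂ : ℕ):ℝ)*μ₂/d0) * g1
              + (((k-1:ℕ):ℝ)*μ₁/d0) * (g0 - g1) := by ring
        rw [e, hpq0, one_mul]
        have := mul_nonneg hp0 (sub_nonneg.mpr h01)
        linarith
      have hdd : h₀/d1 ≤ h₀/d0 := by
        gcongr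
      linarith [key1, key0, c1, c0, hdd]

lemma neg_drift (C₁ C₂ : ℕ) (hC₂ : 1 ≤ C₂) (hC : C₂ < C₁) (μ₁ μ₂ h₀ h₁ h₂ : ℝ)
    (hμ₁ : 0 < μ₁) (hμ₂ : 0 < μ₂) (hh₀ : 0 < h₀)
    (v : ℕ → ℕ → ℕ → ℝ) (hv : IsValue C₁ C₂ μ₁ μ₂ h₀ h₁ h₂ v)
    (i j : ℕ) (hj1 : 1 ≤ j) (hjC : j ≤ C₁)
    (hprev : 2 ≤ j → v i (j-1) (C₁-(j-1)) - v i (j-1-1) (C₁-(j-1-1)) ≤ 0) :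
    v (i+1) j (C₁-j) - v (i+1) (j-1) (C₁-(j-1))
      ≤ (((i:ℝ)+1)*h₀ + (j:ℝ)*h₁ + ((C₁-j:ℕ):ℝ)*h₂)/dRate C₂ μ₁ μ₂ j (C₁-j)
        - (((i:ℝ)+1)*h₀ + ((j-1:ℕ):ℝ)*h₁ + ((C₁-(j-1):ℕ):ℝ)*h₂)/dRate C₂ μ₁ μ₂ (j-1) (C₁-(j-1))
        + max (v i j (C₁-j) - v i (j-1) (C₁-(j-1))) 0 := by
  have bell : ∀ a jj, 1 ≤ jj → jj < C₁ →
      v (a+1) jj (C₁-jj) = (((a:ℝ)+1)*h₀ + (jj:ℝ)*h₁ + ((C₁-jj : ℕ):ℝ)*h₂) / dRate C₂ μ₁ μ₂ jj (C₁-jj)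
        + ((jj:ℝ)*μ₁ / dRate C₂ μ₁ μ₂ jj (C₁-jj)) * min (v a jj (C₁-jj)) (v a (jj-1) (C₁-(jj-1)))
        + (((min (C₁-jj) C₂ : ℕ):ℝ)*μ₂ / dRate C₂ μ₁ μ₂ jj (C₁-jj))
            * min (v a (jj+1) (C₁-(jj+1))) (v a jj (C₁-jj)) := by
    intro a jj h1 h2
    have h := hv.2.2 a jj (C₁-jj) (by omega)
    rwa [show C₁-jj+1 = C₁-(jj-1) from by omega, show C₁-jj-1 = C₁-(jj+1) from by omega] at h
  -- upper bound for state j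
  have hA : v (i+1) j (C₁-j)
      ≤ (((i:ℝ)+1)*h₀ + (j:ℝ)*h₁ + ((C₁-j:ℕ):ℝ)*h₂)/dRate C₂ μ₁ μ₂ j (C₁-j) + v i j (C₁-j) := by
    obtain ⟨hdpos, hp, hq, hpq⟩ := coeff_facts C₁ C₂ hC₂ hC μ₁ μ₂ hμ₁ hμ₂ j hjC
    rcases eq_or_lt_of_le hjC with hje | hjlt
    · have h0 : C₁ - j = 0 := by omega
      rw [h0] at hpq hp ⊢
      simp only [Nat.zero_min, Nat.cast_zero, zero_mul, zero_div, add_zero, zero_add] at hpq ⊢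
      have e := hv.2.2 i j 0 (by omega)
      simp only [Nat.zero_min, Nat.cast_zero, zero_mul, zero_div, add_zero, zero_add] at e
      rw [e, hpq]
      have l1 : min (v i j 0) (v i (j-1) 1) ≤ v i j 0 := min_le_left _ _
      linarith [l1]
    · have e := bell i j hj1 hjlt
      rw [e]
      have l1 := mul_le_mul_of_nonneg_left
        (min_le_left (v i j (C₁-j)) (v i (j-1) (C₁-(j-1)))) hp
      have l2 := mul_le_mul_of_nonneg_left
        (min_le_right (v i (j+1) (C₁-(j+1))) (v i j (C₁-j))) hq
      have hw : ((j:ℝ)*μ₁/dRate C₂ μ₁ μ₂ j (C₁-j)) * v i j (C₁-j)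
          + (((min (C₁-j) C₂ : ℕ):ℝ)*μ₂/dRate C₂ μ₁ μ₂ j (C₁-j)) * v i j (C₁-j)
          = v i j (C₁-j) := by
        have e2 : ((j:ℝ)*μ₁/dRate C₂ μ₁ μ₂ j (C₁-j)) * v i j (C₁-j)
            + (((min (C₁-j) C₂ : ℕ):ℝ)*μ₂/dRate C₂ μ₁ μ₂ j (C₁-j)) * v i j (C₁-j)
            = ((j:ℝ)*μ₁/dRate C₂ μ₁ μ₂ j (C₁-j)
              + ((min (C₁-j) C₂ : ℕ):ℝ)*μ₂/dRate C₂ μ₁ μ₂ j (C₁-j)) * v i j (C₁-j) := by ring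
        rw [e2, hpq, one_mul]
      linarith [l1, l2, hw]
  -- lower bound for state j-1
  have hB : (((i:ℝ)+1)*h₀ + ((j-1:ℕ):ℝ)*h₁ + ((C₁-(j-1):ℕ):ℝ)*h₂)/dRate C₂ μ₁ μ₂ (j-1) (C₁-(j-1))
        + v i (j-1) (C₁-(j-1)) + min (v i j (C₁-j) - v i (j-1) (C₁-(j-1))) 0
      ≤ v (i+1) (j-1) (C₁-(j-1)) := by
    obtain ⟨hdpos, hp, hq, hpq⟩ := coeff_facts C₁ C₂ hC₂ hC μ₁ μ₂ hμ₁ hμ₂ (j-1) (by omega)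
    have hqle1 : ((min (C₁-(j-1)) C₂ : ℕ):ℝ)*μ₂/dRate C₂ μ₁ μ₂ (j-1) (C₁-(j-1)) ≤ 1 := by
      linarith
    have hmin0 : min (v i j (C₁-j) - v i (j-1) (C₁-(j-1))) 0 ≤ 0 := min_le_right _ _
    rcases Nat.lt_or_ge j 2 with hj2 | hj2
    · -- j = 1
      have hjeq : j = 1 := by omega
      subst hjeq
      simp only [show (1:ℕ)-1 = 0 from rfl, Nat.sub_zero] at hpq hq hqle1 ⊢
      have e := hv.2.2 i 0 C₁ (by omega)
      simp only [Nat.cast_zero, zero_mul, zero_div, zero_add, add_zero] at e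
      have hm2 : v i 0 C₁ + min (v i 1 (C₁-1) - v i 0 C₁) 0 ≤ min (v i (0+1) (C₁-1)) (v i 0 C₁) := by
        rw [show (0:ℕ)+1 = 1 from rfl, min_shift (v i 1 (C₁-1)) (v i 0 C₁)]
      have hqmul := mul_le_mul_of_nonneg_left hm2 hq
      have hq1 : ((min C₁ C₂ : ℕ):ℝ)*μ₂/dRate C₂ μ₁ μ₂ 0 C₁ = 1 := by
        simpa using hpq
      rw [hq1, one_mul] at hqmul
      rw [e, hq1, one_mul]
      simp only [Nat.cast_zero, zero_mul, zero_add, add_zero] at hqmul ⊢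
      linarith [hqmul]
    · -- 2 ≤ j
      have e := bell i (j-1) (by omega) (by omega)
      rw [show j-1+1 = j from by omega] at e
      rw [min_eq_left (by linarith [hprev hj2] :
        v i (j-1) (C₁-(j-1)) ≤ v i (j-1-1) (C₁-(j-1-1)))] at e
      have hm2 : v i (j-1) (C₁-(j-1)) + min (v i j (C₁-j) - v i (j-1) (C₁-(j-1))) 0
          ≤ min (v i j (C₁-j)) (v i (j-1) (C₁-(j-1))) := by
        rw [min_shift (v i j (C₁-j)) (v i (j-1) (C₁-(j-1)))]
      have hqmul := mul_le_mul_of_nonneg_left hm2 hq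
      have hexp : (((min (C₁-(j-1)) C₂ : ℕ):ℝ)*μ₂/dRate C₂ μ₁ μ₂ (j-1) (C₁-(j-1)))
            * (v i (j-1) (C₁-(j-1)) + min (v i j (C₁-j) - v i (j-1) (C₁-(j-1))) 0)
          = (((min (C₁-(j-1)) C₂ : ℕ):ℝ)*μ₂/dRate C₂ μ₁ μ₂ (j-1) (C₁-(j-1))) * v i (j-1) (C₁-(j-1))
            + (((min (C₁-(j-1)) C₂ : ℕ):ℝ)*μ₂/dRate C₂ μ₁ μ₂ (j-1) (C₁-(j-1)))
              * min (v i j (C₁-j) - v i (j-1) (C₁-(j-1))) 0 := by ring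
      rw [hexp] at hqmul
      have hw : (((j-1:ℕ):ℝ)*μ₁/dRate C₂ μ₁ μ₂ (j-1) (C₁-(j-1))) * v i (j-1) (C₁-(j-1))
          + (((min (C₁-(j-1)) C₂ : ℕ):ℝ)*μ₂/dRate C₂ μ₁ μ₂ (j-1) (C₁-(j-1))) * v i (j-1) (C₁-(j-1))
          = v i (j-1) (C₁-(j-1)) := by
        have e2 : (((j-1:ℕ):ℝ)*μ₁/dRate C₂ μ₁ μ₂ (j-1) (C₁-(j-1))) * v i (j-1) (C₁-(j-1))
            + (((min (C₁-(j-1)) C₂ : ℕ):ℝ)*μ₂/dRate C₂ μ₁ μ₂ (j-1) (C₁-(j-1))) * v i (j-1) (C₁-(j-1))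
            = (((j-1:ℕ):ℝ)*μ₁/dRate C₂ μ₁ μ₂ (j-1) (C₁-(j-1))
              + ((min (C₁-(j-1)) C₂ : ℕ):ℝ)*μ₂/dRate C₂ μ₁ μ₂ (j-1) (C₁-(j-1))) * v i (j-1) (C₁-(j-1)) := by ring
        rw [e2, hpq, one_mul]
      have hqmin : (((min (C₁-(j-1)) C₂ : ℕ):ℝ)*μ₂/dRate C₂ μ₁ μ₂ (j-1) (C₁-(j-1)))
            * min (v i j (C₁-j) - v i (j-1) (C₁-(j-1))) 0
          ≥ min (v i j (C₁-j) - v i (j-1) (C₁-(j-1))) 0 := by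
        nlinarith [hmin0, hqle1]
      rw [e]
      linarith [hqmul, hqmin, hw]
  have hid : v i j (C₁-j) - v i (j-1) (C₁-(j-1))
      - min (v i j (C₁-j) - v i (j-1) (C₁-(j-1))) 0
      = max (v i j (C₁-j) - v i (j-1) (C₁-(j-1))) 0 := by
    have := min_add_max (v i j (C₁-j) - v i (j-1) (C₁-(j-1))) (0:ℝ)
    linarith
  linarith [hA, hB, hid]

theorem stmt1
    (C₁ C₂ : ℕ) (hC₂pos : 1 ≤ C₂) (hC : C₂ < C₁)
    (μ₁ μ₂ h₀ h₁ h₂ : ℝ)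
    (hμ₁ : 0 < μ₁) (hμ₂ : 0 < μ₂)
    (hh₀ : 0 < h₀) (hh₁ : 0 < h₁) (hh₂ : 0 < h₂)
    (v : ℕ → ℕ → ℕ → ℝ) (hv : IsValue C₁ C₂ μ₁ μ₂ h₀ h₁ h₂ v)
    (hμ : μ₂ ≤ μ₁)
    (k ℓ : ℕ) (hkl : k + ℓ = C₁) (hk : 1 ≤ k)
    (hcase : C₂ ≤ ℓ ∨ (μ₂ < μ₁ ∧ ℓ < C₂)) :
    ∃ N : ℕ, (∀ i : ℕ, Dv v i k ℓ ≤ 0 ↔ N ≤ i) ∧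
      ∃ I : ℕ, ∀ i : ℕ, I ≤ i → Dv v i k ℓ < 0 := by
  classical
  have hkC : k ≤ C₁ := by omega
  have hl : ℓ = C₁ - k := by omega
  subst hl
  have humono : ∀ i j, 1 ≤ j → j ≤ C₁ →
      v (i+1) j (C₁-j) - v i j (C₁-j)
        ≤ v (i+1) (j-1) (C₁-(j-1)) - v i (j-1) (C₁-(j-1)) := by
    intro i
    induction i with
    | zero => exact base_mono C₁ C₂ hC₂pos hC μ₁ μ₂ h₀ h₁ h₂ hμ₁ hμ₂ hh₀ hh₁ hh₂ hμ v hv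
    | succ n ih => exact step_mono C₁ C₂ hC₂pos hC μ₁ μ₂ h₀ h₁ h₂ hμ₁ hμ₂ hh₀ hμ v hv n ih
  have hDstep : ∀ i j, 1 ≤ j → j ≤ C₁ →
      v (i+1) j (C₁-j) - v (i+1) (j-1) (C₁-(j-1))
        ≤ v i j (C₁-j) - v i (j-1) (C₁-(j-1)) := by
    intro i j h1 h2
    have := humono i j h1 h2
    linarith
  have hDanti : ∀ j, 1 ≤ j → j ≤ C₁ → ∀ a b : ℕ, a ≤ b →
      v b j (C₁-j) - v b (j-1) (C₁-(j-1)) ≤ v a j (C₁-j) - v a (j-1) (C₁-(j-1)) := by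
    intro j h1 h2 a b hab
    induction b, hab using Nat.le_induction with
    | base => exact le_rfl
    | succ b hab ih => exact le_trans (hDstep b j h1 h2) ih
  have hstrict : ∀ j, 1 ≤ j → j ≤ k →
      dRate C₂ μ₁ μ₂ (j-1) (C₁-(j-1)) < dRate C₂ μ₁ μ₂ j (C₁-j) := by
    intro j h1 h2
    apply dRate_diag_strict C₁ C₂ μ₁ μ₂ hμ₁ hμ₂ j h1 (by omega)
    rcases hcase with hc | hc
    · left; omega
    · right; exact hc.1
  have hev : ∀ j, 1 ≤ j → j ≤ k →
      ∃ I, ∀ i, I ≤ i → v i j (C₁-j) - v i (j-1) (C₁-(j-1)) < 0 := by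
    intro j
    induction j with
    | zero => intro h1 _; exact absurd h1 (by omega)
    | succ j ihj =>
      intro _ h2
      obtain ⟨I₀, hI₀⟩ : ∃ I₀, ∀ i, I₀ ≤ i →
          (2 ≤ j+1 → v i (j+1-1) (C₁-(j+1-1)) - v i (j+1-1-1) (C₁-(j+1-1-1)) ≤ 0) := by
        rcases Nat.eq_zero_or_pos j with rfl | hj
        · exact ⟨0, fun i _ h => absurd h (by omega)⟩
        · obtain ⟨I₀, hI₀⟩ := ihj (by omega) (by omega)
          refine ⟨I₀, fun i hi _ => ?_⟩
          simp only [Nat.add_sub_cancel]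
          exact le_of_lt (hI₀ i hi)
      have hj1C : j + 1 ≤ C₁ := by omega
      have hdlt := hstrict (j+1) (by omega) h2
      simp only [Nat.add_sub_cancel] at hdlt
      obtain ⟨hdpos, -, -, -⟩ := coeff_facts C₁ C₂ hC₂pos hC μ₁ μ₂ hμ₁ hμ₂ (j+1) hj1C
      obtain ⟨hd'pos, -, -, -⟩ := coeff_facts C₁ C₂ hC₂pos hC μ₁ μ₂ hμ₁ hμ₂ j (by omega)
      set dj := dRate C₂ μ₁ μ₂ (j+1) (C₁-(j+1)) with hdj
      set dj' := dRate C₂ μ₁ μ₂ j (C₁-j) with hdj'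
      set M := max (v I₀ (j+1) (C₁-(j+1)) - v I₀ j (C₁-j)) 0 with hM
      set A := ((j+1:ℕ):ℝ)*h₁ + ((C₁-(j+1):ℕ):ℝ)*h₂ with hA
      set B := ((j:ℕ):ℝ)*h₁ + ((C₁-j:ℕ):ℝ)*h₂ with hB
      have hγpos : 0 < h₀*(1/dj' - 1/dj) := by
        have h1 : 1/dj < 1/dj' := one_div_lt_one_div_of_lt hd'pos hdlt
        nlinarith
      obtain ⟨n, hn⟩ := exists_nat_gt ((A/dj - B/dj' + M) / (h₀*(1/dj' - 1/dj)))
      set i₀ := max I₀ n with hi₀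
      have hi₀I : I₀ ≤ i₀ := le_max_left _ _
      have hcast : (n:ℝ) ≤ (i₀:ℝ)+1 := by
        have : (n:ℝ) ≤ (i₀:ℝ) := Nat.cast_le.2 (le_max_right _ _)
        linarith
      have hlt : A/dj - B/dj' + M < ((i₀:ℝ)+1) * (h₀*(1/dj' - 1/dj)) :=
        (div_lt_iff₀ hγpos).1 (lt_of_lt_of_le hn hcast)
      have hdne : dj ≠ 0 := ne_of_gt hdpos
      have hd'ne : dj' ≠ 0 := ne_of_gt hd'pos
      have hΔ : (((i₀:ℝ)+1)*h₀ + A)/dj - (((i₀:ℝ)+1)*h₀ + B)/dj'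
          = -(((i₀:ℝ)+1)*(h₀*(1/dj' - 1/dj))) + (A/dj - B/dj') := by
        field_simp
        ring
      have hnd := neg_drift C₁ C₂ hC₂pos hC μ₁ μ₂ h₀ h₁ h₂ hμ₁ hμ₂ hh₀ v hv
        i₀ (j+1) (by omega) hj1C (hI₀ i₀ hi₀I)
      simp only [Nat.add_sub_cancel] at hnd
      have hre1 : (((i₀:ℝ)+1)*h₀ + ((j+1:ℕ):ℝ)*h₁ + ((C₁-(j+1):ℕ):ℝ)*h₂)/dj
          = (((i₀:ℝ)+1)*h₀ + A)/dj := by rw [hA]; ring_nf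
      have hre2 : (((i₀:ℝ)+1)*h₀ + ((j:ℕ):ℝ)*h₁ + ((C₁-j:ℕ):ℝ)*h₂)/dj'
          = (((i₀:ℝ)+1)*h₀ + B)/dj' := by rw [hB]; ring_nf
      rw [hre1, hre2] at hnd
      have hanti := hDanti (j+1) (by omega) hj1C I₀ i₀ hi₀I
      simp only [Nat.add_sub_cancel] at hanti
      have hmax : max (v i₀ (j+1) (C₁-(j+1)) - v i₀ j (C₁-j)) 0 ≤ M :=
        max_le_max hanti le_rfl
      have hneg : v (i₀+1) (j+1) (C₁-(j+1)) - v (i₀+1) j (C₁-j) < 0 := by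
        linarith [hnd, hmax, hΔ, hlt]
      refine ⟨i₀+1, fun i hi => ?_⟩
      simp only [Nat.add_sub_cancel]
      have hA2 := hDanti (j+1) (by omega) hj1C (i₀+1) i hi
      simp only [Nat.add_sub_cancel] at hA2
      linarith [hA2, hneg]
  obtain ⟨I, hI⟩ := hev k hk le_rfl
  have hex : ∃ n, v n k (C₁-k) - v n (k-1) (C₁-(k-1)) ≤ 0 := ⟨I, le_of_lt (hI I le_rfl)⟩
  have hDvi : ∀ i, Dv v i k (C₁-k) = v i k (C₁-k) - v i (k-1) (C₁-(k-1)) := by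
    intro i
    unfold Dv
    rw [show C₁-k+1 = C₁-(k-1) from by omega]
  refine ⟨Nat.find hex, ?_, I, ?_⟩
  · intro i
    rw [hDvi i]
    constructor
    · intro h
      exact Nat.find_le h
    · intro h
      have h1 := Nat.find_spec hex
      have h2 := hDanti k hk hkC (Nat.find hex) i h
      linarith
  · intro i hi
    rw [hDvi i]
    exact hI i hi
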